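/- Let G be a graph. A vertex v of G has infinite degree if and only if v dominates some end of G or v lies in some critical vertex set of G. -/

import Mathlib

open SimpleGraph Set

variable {V : Type*}

/-- The set of components of `G - X` (the subgraph of `G` induced on `Xᶜ`). -/
abbrev Comps (G : SimpleGraph V) (X : Set V) := (G.induce Xᶜ).ConnectedComponent

/-- The vertex set (in `V`) of a component of `G - X`. -/
def suppV (G : SimpleGraph V) (X : Set V) (C : Comps G X) : Set V :=
  Subtype.val '' {v | (G.induce Xᶜ).connectedComponentMk v = C}

/-- The neighbourhood `N(C) ⊆ X` of a component `C` of `G - X`. -/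
def nbhd (G : SimpleGraph V) (X : Set V) (C : Comps G X) : Set V :=
  {x ∈ X | ∃ v ∈ suppV G X C, G.Adj x v}

/-- `C_X(Y)`: the components of `G - X` with neighbourhood exactly `Y`. -/
def compsWithNbhd (G : SimpleGraph V) (X Y : Set V) : Set (Comps G X) :=
  {C | nbhd G X C = Y}

/-- A finite vertex set `Y` is critical if `C_Y(Y)` is infinite. -/
def Critical (G : SimpleGraph V) (Y : Set V) : Prop :=
  Y.Finite ∧ (compsWithNbhd G Y Y).Infinite

/-- The inclusion graph homomorphism `G - X' → G - X`, for `X ⊆ X'`. -/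
def inclHom (G : SimpleGraph V) {X X' : Set V} (h : X ⊆ X') :
    (G.induce X'ᶜ) →g (G.induce Xᶜ) where
  toFun v := ⟨v.1, fun hv => v.2 (h hv)⟩
  map_rel' := fun hadj => hadj

/-- `c_{X',X}`: sends each component of `G - X'` to the component of `G - X`
containing it. -/
def compMap (G : SimpleGraph V) {X X' : Set V} (h : X ⊆ X') :
    Comps G X' → Comps G X :=
  SimpleGraph.ConnectedComponent.map (inclHom G h)

section Aux

variable {G : SimpleGraph V}

lemma mem_suppV {X : Set V} {C : Comps G X} {w : V} :
    w ∈ suppV G X C ↔ ∃ h : w ∈ Xᶜ, (G.induce Xᶜ).connectedComponentMk ⟨w, h⟩ = C := by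
  constructor
  · rintro ⟨⟨u, hu⟩, hmk, rfl⟩
    exact ⟨hu, hmk⟩
  · rintro ⟨h, hmk⟩
    exact ⟨⟨w, h⟩, hmk, rfl⟩

lemma suppV_eq_of_mem {X : Set V} {C₁ C₂ : Comps G X} {w : V}
    (h1 : w ∈ suppV G X C₁) (h2 : w ∈ suppV G X C₂) : C₁ = C₂ := by
  obtain ⟨hw1, e1⟩ := mem_suppV.mp h1
  obtain ⟨hw2, e2⟩ := mem_suppV.mp h2
  rw [← e1, ← e2]

lemma suppV_subset_compl {X : Set V} (C : Comps G X) : suppV G X C ⊆ Xᶜ := by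
  rintro w hw
  exact (mem_suppV.mp hw).1

lemma compMap_comp {X X' X'' : Set V} (h1 : X ⊆ X') (h2 : X' ⊆ X'') (h3 : X ⊆ X'')
    (C : Comps G X'') :
    compMap G h1 (compMap G h2 C) = compMap G h3 C := by
  refine C.ind fun u => ?_
  rfl

lemma suppV_subset_compMap {X X' : Set V} (h : X ⊆ X') (C : Comps G X') {w : V}
    (hw : w ∈ suppV G X' C) : w ∈ suppV G X (compMap G h C) := by
  obtain ⟨hw', e⟩ := mem_suppV.mp hw
  refine mem_suppV.mpr ⟨fun hx => hw' (h hx), ?_⟩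
  rw [← e]
  rfl

lemma suppV_compMap_eq {Y X : Set V} (hYX : Y ⊆ X) (C : Comps G X)
    (hC : nbhd G X C = Y) : suppV G Y (compMap G hYX C) = suppV G X C := by
  refine Subset.antisymm ?_ (fun w hw => suppV_subset_compMap hYX C hw)
  -- key: a walk in `G - Y` starting in `suppV G X C` stays in `suppV G X C`
  have key : ∀ (a b : ↥Yᶜ) (_ : (G.induce Yᶜ).Walk a b),
      a.1 ∈ suppV G X C → b.1 ∈ suppV G X C := by
    intro a b p
    induction p with
    | nil => exact id
    | @cons a c b hadj p ih =>
        intro ha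
        apply ih
        have hadj' : G.Adj a.1 c.1 := hadj
        -- c.1 ∉ X, else c.1 ∈ nbhd G X C = Y
        have hcX : c.1 ∈ Xᶜ := by
          intro hcx
          have hmem : c.1 ∈ nbhd G X C := ⟨hcx, a.1, ha, hadj'.symm⟩
          rw [hC] at hmem
          exact c.2 hmem
        obtain ⟨haX, e⟩ := mem_suppV.mp ha
        refine mem_suppV.mpr ⟨hcX, ?_⟩
        rw [← e]
        exact ConnectedComponent.connectedComponentMk_eq_of_adj
          (by exact hadj'.symm : (G.induce Xᶜ).Adj ⟨c.1, hcX⟩ ⟨a.1, haX⟩)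
  intro w hw
  obtain ⟨hwY, e⟩ := mem_suppV.mp hw
  -- get a representative of C
  obtain ⟨u, hu⟩ : ∃ u, (G.induce Xᶜ).connectedComponentMk u = C := C.exists_rep
  have huS : u.1 ∈ suppV G X C := mem_suppV.mpr ⟨u.2, by rw [← hu]⟩
  have hmap : compMap G hYX C = (G.induce Yᶜ).connectedComponentMk ⟨u.1, fun h => u.2 (hYX h)⟩ := by
    rw [← hu]; rfl
  rw [hmap] at e
  obtain ⟨p⟩ := (SimpleGraph.ConnectedComponent.eq.mp e).symm
  exact key _ _ p huS

lemma nbhd_subset {X : Set V} (C : Comps G X) : nbhd G X C ⊆ X := fun _ h => h.1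

lemma nbhd_compMap {Y X : Set V} (hYX : Y ⊆ X) (C : Comps G X)
    (hC : nbhd G X C = Y) : nbhd G Y (compMap G hYX C) = Y := by
  have hs := suppV_compMap_eq hYX C hC
  ext x
  constructor
  · exact fun h => h.1
  · intro hx
    have hx' : x ∈ nbhd G X C := hC ▸ hx
    exact ⟨hx, hx'.2.imp fun w hw => ⟨hs ▸ hw.1, hw.2⟩⟩

end Aux

/-- A vertex `v` has infinite degree iff `v` dominates some end
(a direction, i.e. a compatible choice of components) of `G` or `v` lies in some
critical vertex set. -/
theorem stmt8 (G : SimpleGraph V) (v : V) :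
    (G.neighborSet v).Infinite ↔
      ((∃ f : ∀ X : Finset V, Comps G (X : Set V),
          (∀ (X X' : Finset V) (hXX' : (X : Set V) ⊆ (X' : Set V)),
            compMap G hXX' (f X') = f X) ∧
          (∀ X : Finset V, v ∉ X → ∃ w ∈ suppV G (X : Set V) (f X), G.Adj v w))
        ∨ ∃ Y : Set V, Critical G Y ∧ v ∈ Y) := by
  classical
  constructor
  · -- forward direction
    intro hinf
    by_cases hcase : ∃ X : Finset V, v ∈ X ∧
        {C : Comps G (X : Set V) | (suppV G (X : Set V) C ∩ G.neighborSet v).Nonempty}.Infinite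
    · -- v lies in a critical set
      right
      obtain ⟨X, hvX, hT⟩ := hcase
      set T := {C : Comps G (X : Set V) |
        (suppV G (X : Set V) C ∩ G.neighborSet v).Nonempty} with hTdef
      haveI : Infinite ↥T := hT.to_subtype
      have hfin : {s : Set V | s ⊆ (X : Set V)}.Finite := X.finite_toSet.finite_subsets
      haveI : Finite ↥{s : Set V | s ⊆ (X : Set V)} := hfin.to_subtype
      obtain ⟨⟨Y, hYX⟩, hYinf⟩ := Finite.exists_infinite_fiber
        (fun C : ↥T => (⟨nbhd G (X : Set V) C.1, nbhd_subset C.1⟩ :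
          ↥{s : Set V | s ⊆ (X : Set V)}))
      -- every C in the fiber has nbhd = Y
      have hfib : ∀ C : ↥T, C ∈ (fun C : ↥T =>
            (⟨nbhd G (X : Set V) C.1, nbhd_subset C.1⟩ : ↥{s : Set V | s ⊆ (X : Set V)}))
            ⁻¹' {⟨Y, hYX⟩} → nbhd G (X : Set V) C.1 = Y := by
        intro C hC
        simpa [Subtype.ext_iff] using hC
      -- v ∈ nbhd C for every C ∈ T
      have hvnb : ∀ C : ↥T, v ∈ nbhd G (X : Set V) C.1 := by
        rintro ⟨C, w, hwS, hwN⟩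
        exact ⟨hvX, w, hwS, hwN⟩
      have hvY : v ∈ Y := by
        obtain ⟨C, hC⟩ := (Set.infinite_coe_iff.mp hYinf).nonempty
        exact hfib C hC ▸ hvnb C
      refine ⟨Y, ⟨X.finite_toSet.subset hYX, ?_⟩, hvY⟩
      haveI : Infinite ↥((fun C : ↥T =>
          (⟨nbhd G (X : Set V) C.1, nbhd_subset C.1⟩ : ↥{s : Set V | s ⊆ (X : Set V)}))
          ⁻¹' {⟨Y, hYX⟩}) := hYinf
      refine Set.infinite_of_injective_forall_mem
        (f := fun C : ↥((fun C : ↥T =>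
          (⟨nbhd G (X : Set V) C.1, nbhd_subset C.1⟩ : ↥{s : Set V | s ⊆ (X : Set V)}))
          ⁻¹' {⟨Y, hYX⟩}) => compMap G hYX C.1.1) ?_ ?_
      · -- injective
        rintro ⟨C₁, hC₁⟩ ⟨C₂, hC₂⟩ heq
        have e1 := suppV_compMap_eq hYX C₁.1 (hfib C₁ hC₁)
        have e2 := suppV_compMap_eq hYX C₂.1 (hfib C₂ hC₂)
        have heq' : compMap G hYX C₁.1 = compMap G hYX C₂.1 := heq
        have hsupp : suppV G (X : Set V) C₁.1 = suppV G (X : Set V) C₂.1 := by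
          rw [← e1, ← e2, heq']
        obtain ⟨w, hwS, _⟩ := C₁.2
        have hwS2 : w ∈ suppV G (X : Set V) C₂.1 := hsupp ▸ hwS
        exact Subtype.ext (Subtype.ext (suppV_eq_of_mem hwS hwS2))
      · rintro ⟨C, hC⟩
        exact nbhd_compMap hYX C.1 (hfib C hC)
    · -- v dominates an end: construct a direction using an ultrafilter
      left
      push_neg at hcase
      have hfinC : ∀ X : Finset V, v ∈ X →
          {C : Comps G (X : Set V) | (suppV G (X : Set V) C ∩ G.neighborSet v).Nonempty}.Finite :=
        fun X hX => hcase X hX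
      -- an ultrafilter containing the neighbourhood of v and no finite set
      haveI hne : Filter.NeBot (Filter.cofinite ⊓ Filter.principal (G.neighborSet v)) :=
        hinf.cofinite_inf_principal_neBot
      set U : Ultrafilter V := Ultrafilter.of (Filter.cofinite ⊓ Filter.principal (G.neighborSet v))
        with hUdef
      have hUle := Ultrafilter.of_le (Filter.cofinite ⊓ Filter.principal (G.neighborSet v))
      have hNv : G.neighborSet v ∈ U :=
        hUle (Filter.mem_inf_of_right (Filter.mem_principal_self _))
      have hcof : ∀ s : Set V, s.Finite → sᶜ ∈ U := fun s hs =>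
        hUle (Filter.mem_inf_of_left (by simpa using hs))
      -- the large sets
      set A : ∀ X : Finset V, Comps G ((X ∪ {v} : Finset V) : Set V) → Set V :=
        fun X C => G.neighborSet v ∩ suppV G ((X ∪ {v} : Finset V) : Set V) C with hAdef
      have hvmem : ∀ X : Finset V, v ∈ X ∪ {v} := fun X => Finset.mem_union_right _ (by simp)
      have hex : ∀ X : Finset V, ∃! C : Comps G ((X ∪ {v} : Finset V) : Set V), A X C ∈ U := by
        intro X
        have h1 : (G.neighborSet v ∩ (((X ∪ {v} : Finset V) : Set V))ᶜ) ∈ U :=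
          Filter.inter_mem hNv (hcof _ (X ∪ {v}).finite_toSet)
        set S := {C : Comps G ((X ∪ {v} : Finset V) : Set V) |
          (suppV G ((X ∪ {v} : Finset V) : Set V) C ∩ G.neighborSet v).Nonempty} with hSdef
        have hS : S.Finite := hfinC _ (hvmem X)
        have hsub : G.neighborSet v ∩ (((X ∪ {v} : Finset V) : Set V))ᶜ ⊆
            ⋃ C ∈ S, A X C := by
          rintro w ⟨hwN, hwX⟩
          have hwS : w ∈ suppV G ((X ∪ {v} : Finset V) : Set V)
              ((G.induce (((X ∪ {v} : Finset V) : Set V))ᶜ).connectedComponentMk ⟨w, hwX⟩) :=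
            mem_suppV.mpr ⟨hwX, rfl⟩
          exact Set.mem_biUnion (show _ ∈ S from ⟨w, hwS, hwN⟩) ⟨hwN, hwS⟩
        have hU2 : (⋃ C ∈ S, A X C) ∈ U := Filter.mem_of_superset h1 hsub
        obtain ⟨C, _, hCU⟩ := (Ultrafilter.finite_biUnion_mem_iff hS).mp hU2
        refine ⟨C, hCU, fun C' hC' => ?_⟩
        obtain ⟨w, hw1, hw2⟩ := U.nonempty_of_mem (Filter.inter_mem hC' hCU)
        exact suppV_eq_of_mem hw1.2 hw2.2
      choose h hh huniq using hex
      have hsub1 : ∀ X : Finset V, (X : Set V) ⊆ ((X ∪ {v} : Finset V) : Set V) := by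
        intro X
        exact Finset.coe_subset.mpr (Finset.subset_union_left (s₂ := ({v} : Finset V)))
      refine ⟨fun X => compMap G (hsub1 X) (h X), ?_, ?_⟩
      · intro X X' hXX'
        have hsub2 : ((X ∪ {v} : Finset V) : Set V) ⊆ ((X' ∪ {v} : Finset V) : Set V) := by
          intro x hx
          simp only [Finset.coe_union, Finset.coe_singleton, Set.mem_union] at hx ⊢
          exact hx.imp (fun h => hXX' h) id
        have key : compMap G hsub2 (h X') = h X := by
          apply huniq
          refine Filter.mem_of_superset (hh X') ?_
          rintro w ⟨hwN, hwS⟩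
          exact ⟨hwN, suppV_subset_compMap hsub2 _ hwS⟩
        calc compMap G hXX' (compMap G (hsub1 X') (h X'))
            = compMap G ((hsub1 X).trans hsub2) (h X') :=
              compMap_comp hXX' (hsub1 X') _ (h X')
          _ = compMap G (hsub1 X) (compMap G hsub2 (h X')) :=
              (compMap_comp (hsub1 X) hsub2 _ (h X')).symm
          _ = compMap G (hsub1 X) (h X) := by rw [key]
      · intro X _
        obtain ⟨w, hwN, hwS⟩ := U.nonempty_of_mem (hh X)
        exact ⟨w, suppV_subset_compMap (hsub1 X) _ hwS, hwN⟩
  · -- backward direction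
    rintro (⟨f, _, hdom⟩ | ⟨Y, ⟨hYfin, hYinf⟩, hvY⟩)
    · -- direction case
      intro hfin
      obtain ⟨w, hwS, hadj⟩ := hdom hfin.toFinset (by simp [SimpleGraph.irrefl])
      have : w ∈ (hfin.toFinset : Set V) := by
        simp only [Set.Finite.coe_toFinset]
        exact hadj
      exact suppV_subset_compl _ hwS this
    · -- critical case
      haveI : Infinite ↥(compsWithNbhd G Y Y) := hYinf.to_subtype
      have hpick : ∀ C : ↥(compsWithNbhd G Y Y), ∃ w, w ∈ suppV G Y C.1 ∧ G.Adj v w := by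
        rintro ⟨C, hC⟩
        have : v ∈ nbhd G Y C := by rw [show nbhd G Y C = Y from hC]; exact hvY
        obtain ⟨_, w, hwS, hadj⟩ := this
        exact ⟨w, hwS, hadj⟩
      choose g hg1 hg2 using hpick
      refine Set.infinite_of_injective_forall_mem (f := g) ?_ (fun C => hg2 C)
      intro C₁ C₂ heq
      exact Subtype.ext (suppV_eq_of_mem (hg1 C₁) (heq ▸ hg1 C₂))
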